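/- Let m, m' ∈ ℝ with Δ = |m − m'| > 0, let σ > 0 and ε ≥ 0. Let ν and ν' denote the Gaussian measures on ℝ with means m and m' respectively and common variance σ². Then sup over all measurable sets R ⊆ ℝ of (ν(R) − e^ε · ν'(R)) equals Φ(Δ/(2σ) − ε·σ/Δ) − e^ε · Φ(−Δ/(2σ) − ε·σ/Δ), and the supremum is attained at the set R = {x ∈ ℝ : (density of ν at x) > e^ε · (density of ν' at x)}. -/

import Mathlib

open MeasureTheory ProbabilityTheory

/-- The cumulative distribution function of the standard normal distribution. -/
noncomputable def stdNormalCDF (x : ℝ) : ℝ :=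
  ((gaussianReal 0 1) (Set.Iic x)).toReal

open Set NNReal ENNReal

lemma hVne (σ : ℝ) (hσ : 0 < σ) : (⟨σ ^ 2, sq_nonneg σ⟩ : ℝ≥0) ≠ 0 := by
  intro h
  have : σ ^ 2 = 0 := congrArg NNReal.toReal h
  nlinarith

lemma gaussianReal_noAtoms (m : ℝ) {v : ℝ≥0} (hv : v ≠ 0) : NullSingletonClass (gaussianReal m v) :=
  ⟨fun _ => gaussianReal_absolutelyContinuous m hv Real.volume_singleton⟩

lemma gaussianIic (m σ : ℝ) (hσ : 0 < σ) (a : ℝ) :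
    ((gaussianReal m ⟨σ ^ 2, sq_nonneg σ⟩) (Set.Iic a)).toReal
      = stdNormalCDF ((a - m) / σ) := by
  have hmap : (gaussianReal 0 1).map (fun x => σ * x + m)
      = gaussianReal m ⟨σ ^ 2, sq_nonneg σ⟩ := by
    have h1 : (gaussianReal 0 1).map (σ * ·) = gaussianReal 0 ⟨σ ^ 2, sq_nonneg σ⟩ := by
      rw [gaussianReal_map_const_mul]
      norm_num
      rfl
    have h2 : (gaussianReal 0 ⟨σ ^ 2, sq_nonneg σ⟩).map (· + m)
        = gaussianReal m ⟨σ ^ 2, sq_nonneg σ⟩ := by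
      exact (gaussianReal_map_add_const (μ := 0) (v := ⟨σ ^ 2, sq_nonneg σ⟩) m).trans (by rw [zero_add])
    rw [← h2, ← h1, Measure.map_map (by fun_prop) (by fun_prop)]
    rfl
  rw [← hmap, Measure.map_apply (by fun_prop) measurableSet_Iic]
  have : (fun x => σ * x + m) ⁻¹' Set.Iic a = Set.Iic ((a - m) / σ) := by
    ext x
    simp only [Set.mem_preimage, Set.mem_Iic]
    rw [le_div_iff₀ hσ]
    constructor <;> intro h <;> nlinarith
  rw [this, stdNormalCDF]

lemma stdNormalCDF_neg (a : ℝ) : stdNormalCDF (-a) = 1 - stdNormalCDF a := by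
  haveI := gaussianReal_noAtoms 0 (one_ne_zero (α := ℝ≥0))
  have hmap : (gaussianReal 0 1).map ((-1 : ℝ) * ·) = gaussianReal 0 1 := by
    rw [gaussianReal_map_const_mul]
    norm_num
  have h1 : (gaussianReal 0 1) (Set.Iic (-a)) = (gaussianReal 0 1) (Set.Ici a) := by
    conv_lhs => rw [← hmap]
    rw [Measure.map_apply (by fun_prop) measurableSet_Iic]
    congr 1
    ext x; simp only [Set.mem_preimage, Set.mem_Iic, Set.mem_Ici]
    constructor <;> intro h <;> linarith
  have h2 : (gaussianReal 0 1) (Set.Ici a) = (gaussianReal 0 1) (Set.Ioi a) :=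
    (measure_congr (Ioi_ae_eq_Ici (a := a))).symm
  have h3 : (gaussianReal 0 1) (Set.Ioi a) = 1 - (gaussianReal 0 1) (Set.Iic a) := by
    rw [← Set.compl_Iic, measure_compl measurableSet_Iic (measure_ne_top _ _), measure_univ]
  rw [stdNormalCDF, h1, h2, h3, stdNormalCDF, ENNReal.toReal_sub_of_le prob_le_one one_ne_top]
  simp

lemma gaussianIoi (m σ : ℝ) (hσ : 0 < σ) (t : ℝ) :
    ((gaussianReal m ⟨σ ^ 2, sq_nonneg σ⟩) (Set.Ioi t)).toReal
      = stdNormalCDF ((m - t) / σ) := by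
  haveI : IsProbabilityMeasure (gaussianReal m ⟨σ ^ 2, sq_nonneg σ⟩) :=
    instIsProbabilityMeasureGaussianReal _ _
  have h3 : (gaussianReal m ⟨σ ^ 2, sq_nonneg σ⟩) (Set.Ioi t)
      = 1 - (gaussianReal m ⟨σ ^ 2, sq_nonneg σ⟩) (Set.Iic t) := by
    rw [← Set.compl_Iic, measure_compl measurableSet_Iic (measure_ne_top _ _), measure_univ]
  rw [h3, ENNReal.toReal_sub_of_le prob_le_one one_ne_top, ENNReal.toReal_one,
    gaussianIic m σ hσ]
  have : (m - t) / σ = -((t - m) / σ) := by ring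
  rw [this, stdNormalCDF_neg]

lemma gaussianIio (m σ : ℝ) (hσ : 0 < σ) (t : ℝ) :
    ((gaussianReal m ⟨σ ^ 2, sq_nonneg σ⟩) (Set.Iio t)).toReal
      = stdNormalCDF ((t - m) / σ) := by
  haveI := gaussianReal_noAtoms m (hVne σ hσ)
  rw [measure_congr (Iio_ae_eq_Iic (a := t)), gaussianIic m σ hσ]

lemma pdf_ratio_iff (m m' σ ε : ℝ) (hσ : 0 < σ) (x : ℝ) :
    (gaussianPDFReal m ⟨σ ^ 2, sq_nonneg σ⟩ x >
        Real.exp ε * gaussianPDFReal m' ⟨σ ^ 2, sq_nonneg σ⟩ x)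
    ↔ 2 * ε * σ ^ 2 < (m - m') * (2 * x - m - m') := by
  have hσ2 : (0:ℝ) < σ ^ 2 := by positivity
  have hc : (0:ℝ) < (Real.sqrt (2 * Real.pi * σ ^ 2))⁻¹ := by positivity
  unfold gaussianPDFReal
  erw [NNReal.coe_mk]
  rw [gt_iff_lt, mul_left_comm, mul_lt_mul_iff_right₀ hc, ← Real.exp_add, Real.exp_lt_exp]
  have h1 : ε + -(x - m') ^ 2 / (2 * σ ^ 2) =
      (2 * ε * σ ^ 2 + -(x - m') ^ 2) / (2 * σ ^ 2) := by field_simp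
  rw [h1, div_lt_div_iff_of_pos_right (by positivity)]
  constructor <;> intro h <;> nlinarith

lemma gauss_toReal (m σ : ℝ) (hσ : 0 < σ) (R : Set ℝ) :
    ((gaussianReal m ⟨σ ^ 2, sq_nonneg σ⟩) R).toReal
      = ∫ x in R, gaussianPDFReal m ⟨σ ^ 2, sq_nonneg σ⟩ x := by
  rw [gaussianReal_apply_eq_integral _ (hVne σ hσ)]
  exact ENNReal.toReal_ofReal
    (integral_nonneg fun x => gaussianPDFReal_nonneg _ _ _)

lemma key_le (m m' σ ε : ℝ) (hσ : 0 < σ) (R : Set ℝ) (hR : MeasurableSet R) :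
    ((gaussianReal m ⟨σ ^ 2, sq_nonneg σ⟩) R).toReal -
        Real.exp ε * ((gaussianReal m' ⟨σ ^ 2, sq_nonneg σ⟩) R).toReal
      ≤ ((gaussianReal m ⟨σ ^ 2, sq_nonneg σ⟩)
            {x : ℝ | gaussianPDFReal m ⟨σ ^ 2, sq_nonneg σ⟩ x >
              Real.exp ε * gaussianPDFReal m' ⟨σ ^ 2, sq_nonneg σ⟩ x}).toReal -
          Real.exp ε * ((gaussianReal m' ⟨σ ^ 2, sq_nonneg σ⟩)
            {x : ℝ | gaussianPDFReal m ⟨σ ^ 2, sq_nonneg σ⟩ x >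
              Real.exp ε * gaussianPDFReal m' ⟨σ ^ 2, sq_nonneg σ⟩ x}).toReal := by
  set V : ℝ≥0 := ⟨σ ^ 2, sq_nonneg σ⟩ with hV
  set f : ℝ → ℝ := fun x => gaussianPDFReal m V x - Real.exp ε * gaussianPDFReal m' V x with hf
  set S : Set ℝ := {x : ℝ | gaussianPDFReal m V x > Real.exp ε * gaussianPDFReal m' V x} with hS
  have hSm : MeasurableSet S :=
    measurableSet_lt ((measurable_gaussianPDFReal m' V).const_mul _)
      (measurable_gaussianPDFReal m V)
  have hint1 : Integrable (fun x => gaussianPDFReal m V x) := integrable_gaussianPDFReal m V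
  have hint2 : Integrable (fun x => Real.exp ε * gaussianPDFReal m' V x) :=
    (integrable_gaussianPDFReal m' V).const_mul _
  have hfint : Integrable f := hint1.sub hint2
  have hval : ∀ T : Set ℝ, ((gaussianReal m V) T).toReal -
      Real.exp ε * ((gaussianReal m' V) T).toReal = ∫ x in T, f x := by
    intro T
    rw [gauss_toReal m σ hσ, gauss_toReal m' σ hσ, hf]
    rw [integral_sub hint1.restrict hint2.restrict, MeasureTheory.integral_const_mul]
  rw [hval R, hval S]
  have e1 : (∫ x in R ∩ S, f x) + (∫ x in R \ S, f x) = ∫ x in R, f x :=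
    integral_inter_add_diff hSm hfint.integrableOn
  have e2 : (∫ x in S ∩ R, f x) + (∫ x in S \ R, f x) = ∫ x in S, f x :=
    integral_inter_add_diff hR hfint.integrableOn
  have h1 : (∫ x in R \ S, f x) ≤ 0 := by
    apply setIntegral_nonpos (hR.diff hSm)
    intro x hx
    have : ¬ (gaussianPDFReal m V x > Real.exp ε * gaussianPDFReal m' V x) := hx.2
    simp only [hf]
    push_neg at this
    linarith
  have h2 : (0:ℝ) ≤ ∫ x in S \ R, f x := by
    apply setIntegral_nonneg (hSm.diff hR)
    intro x hx
    have : gaussianPDFReal m V x > Real.exp ε * gaussianPDFReal m' V x := hx.1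
    simp only [hf]
    linarith
  have h3 : (∫ x in R ∩ S, f x) = ∫ x in S ∩ R, f x := by rw [Set.inter_comm]
  linarith

theorem hockey_stick_between_equal_variance_gaussians
    (m m' σ ε Δ : ℝ) (hσ : 0 < σ) (hΔdef : Δ = |m - m'|) (hΔ : 0 < Δ) (hε : 0 ≤ ε) :
    IsGreatest
      {d : ℝ | ∃ R : Set ℝ, MeasurableSet R ∧
        d = ((gaussianReal m ⟨σ ^ 2, sq_nonneg σ⟩) R).toReal -
              Real.exp ε * ((gaussianReal m' ⟨σ ^ 2, sq_nonneg σ⟩) R).toReal}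
      (stdNormalCDF (Δ / (2 * σ) - ε * σ / Δ) -
        Real.exp ε * stdNormalCDF (-(Δ / (2 * σ)) - ε * σ / Δ)) ∧
    ((gaussianReal m ⟨σ ^ 2, sq_nonneg σ⟩)
        {x : ℝ | gaussianPDFReal m ⟨σ ^ 2, sq_nonneg σ⟩ x >
            Real.exp ε * gaussianPDFReal m' ⟨σ ^ 2, sq_nonneg σ⟩ x}).toReal -
      Real.exp ε * ((gaussianReal m' ⟨σ ^ 2, sq_nonneg σ⟩)
        {x : ℝ | gaussianPDFReal m ⟨σ ^ 2, sq_nonneg σ⟩ x >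
            Real.exp ε * gaussianPDFReal m' ⟨σ ^ 2, sq_nonneg σ⟩ x}).toReal =
      stdNormalCDF (Δ / (2 * σ) - ε * σ / Δ) -
        Real.exp ε * stdNormalCDF (-(Δ / (2 * σ)) - ε * σ / Δ) := by
  have hσ2 : (0:ℝ) < σ ^ 2 := by positivity
  have hσ' : σ ≠ 0 := hσ.ne'
  have hΔ' : Δ ≠ 0 := hΔ.ne'
  set S : Set ℝ := {x : ℝ | gaussianPDFReal m ⟨σ ^ 2, sq_nonneg σ⟩ x >
      Real.exp ε * gaussianPDFReal m' ⟨σ ^ 2, sq_nonneg σ⟩ x} with hS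
  have hSm : MeasurableSet S :=
    measurableSet_lt ((measurable_gaussianPDFReal m' _).const_mul _)
      (measurable_gaussianPDFReal m _)
  have hmm : m ≠ m' := by
    intro h
    rw [h, sub_self, abs_zero] at hΔdef
    exact hΔ' hΔdef
  have hattain : ((gaussianReal m ⟨σ ^ 2, sq_nonneg σ⟩) S).toReal -
      Real.exp ε * ((gaussianReal m' ⟨σ ^ 2, sq_nonneg σ⟩) S).toReal =
      stdNormalCDF (Δ / (2 * σ) - ε * σ / Δ) -
        Real.exp ε * stdNormalCDF (-(Δ / (2 * σ)) - ε * σ / Δ) := by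
    rcases lt_or_gt_of_ne hmm with hlt | hgt
    · -- m < m' : Δ = m' - m, S = Iio t with t = -(ε σ²)/Δ + (m+m')/2
      have hΔeq : Δ = m' - m := by rw [hΔdef, abs_of_neg (by linarith : m - m' < 0)]; ring
      set t : ℝ := -(ε * σ ^ 2) / Δ + (m + m') / 2 with ht
      have hSset : S = Set.Iio t := by
        ext x
        have hprod : (m - m') * (2 * x - m - m') = (m + m' - 2 * x) * Δ := by
          rw [hΔeq]; ring
        rw [hS, Set.mem_setOf_eq, pdf_ratio_iff m m' σ ε hσ, Set.mem_Iio, ht, hprod,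
          ← div_lt_iff₀ hΔ]
        have hd : 2 * ε * σ ^ 2 / Δ = -2 * (-(ε * σ ^ 2) / Δ) := by ring
        rw [hd]
        constructor <;> intro h <;> linarith
      have e1 : (t - m) / σ = Δ / (2 * σ) - ε * σ / Δ := by
        rw [ht, hΔeq]
        have : m' - m ≠ 0 := by rw [← hΔeq]; exact hΔ'
        field_simp
        ring
      have e2 : (t - m') / σ = -(Δ / (2 * σ)) - ε * σ / Δ := by
        rw [ht, hΔeq]
        have : m' - m ≠ 0 := by rw [← hΔeq]; exact hΔ'
        field_simp
        ring
      rw [hSset, gaussianIio m σ hσ, gaussianIio m' σ hσ, e1, e2]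
    · -- m > m' : Δ = m - m', S = Ioi t with t = (ε σ²)/Δ + (m+m')/2
      have hΔeq : Δ = m - m' := by rw [hΔdef, abs_of_pos (by linarith : 0 < m - m')]
      set t : ℝ := (ε * σ ^ 2) / Δ + (m + m') / 2 with ht
      have hSset : S = Set.Ioi t := by
        ext x
        have hprod : (m - m') * (2 * x - m - m') = (2 * x - m - m') * Δ := by
          rw [hΔeq]; ring
        rw [hS, Set.mem_setOf_eq, pdf_ratio_iff m m' σ ε hσ, Set.mem_Ioi, ht, hprod,
          ← div_lt_iff₀ hΔ]
        have hd : 2 * ε * σ ^ 2 / Δ = 2 * (ε * σ ^ 2 / Δ) := by ring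
        rw [hd]
        constructor <;> intro h <;> linarith
      have e1 : (m - t) / σ = Δ / (2 * σ) - ε * σ / Δ := by
        rw [ht, hΔeq]
        have : m - m' ≠ 0 := by rw [← hΔeq]; exact hΔ'
        field_simp
        ring
      have e2 : (m' - t) / σ = -(Δ / (2 * σ)) - ε * σ / Δ := by
        rw [ht, hΔeq]
        have : m - m' ≠ 0 := by rw [← hΔeq]; exact hΔ'
        field_simp
        ring
      rw [hSset, gaussianIoi m σ hσ, gaussianIoi m' σ hσ, e1, e2]
  refine ⟨⟨⟨S, hSm, hattain.symm⟩, ?_⟩, hattain⟩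
  rintro d ⟨R, hR, rfl⟩
  calc _ ≤ _ := key_le m m' σ ε hσ R hR
    _ = _ := hattain
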